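/- arXiv:2111.06541 — 4 statements merged into one kernel-verified Lean document; each statement's English description precedes it below -/
import Mathlib

section
/- Let F = x² + y⁶ + z⁶ + xyzw ∈ ℂ[x,y,z,w]. The set of points (x,y,z,w) ∈ ℂ⁴ ∖ {(0,0,0,0)} at which all four partial derivatives ∂F/∂x = 2x + yzw, ∂F/∂y = 6y⁵ + xzw, ∂F/∂z = 6z⁵ + xyw, ∂F/∂w = xyz vanish is exactly {(0,0,0,w) : w ∈ ℂ, w ≠ 0}. (Consequently the hypersurface Z = {F = 0} in the quotient stack P = [(𝔸⁴∖{0})/Γ] has a unique singular point, namely [0:0:0:1].) -/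
/-- The critical locus of `F = x² + y⁶ + z⁶ + xyzw` away from the origin of `ℂ⁴`
is exactly the punctured `w`-axis `{(0,0,0,w) : w ≠ 0}`. -/
theorem degree_two_critical_locus :
    {p : ℂ × ℂ × ℂ × ℂ | p ≠ (0, 0, 0, 0) ∧
        2 * p.1 + p.2.1 * p.2.2.1 * p.2.2.2 = 0 ∧
        6 * p.2.1 ^ 5 + p.1 * p.2.2.1 * p.2.2.2 = 0 ∧
        6 * p.2.2.1 ^ 5 + p.1 * p.2.1 * p.2.2.2 = 0 ∧
        p.1 * p.2.1 * p.2.2.1 = 0} =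
      {p : ℂ × ℂ × ℂ × ℂ | p.1 = 0 ∧ p.2.1 = 0 ∧ p.2.2.1 = 0 ∧ p.2.2.2 ≠ 0} := by
  ext ⟨x, y, z, w⟩
  simp only [Set.mem_setOf_eq, Prod.mk.injEq, ne_eq]
  constructor
  · rintro ⟨hne, h1, h2, h3, h4⟩
    have hx : x = 0 ∧ y = 0 ∧ z = 0 := by
      rcases mul_eq_zero.mp h4 with h | hz
      · rcases mul_eq_zero.mp h with hx | hy
        · -- x = 0
          have hy : y = 0 := by
            have : y ^ 5 = 0 := by
              have := h2; rw [hx] at this; simpa using this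
            exact pow_eq_zero_iff (by norm_num) |>.mp this
          have hz : z = 0 := by
            have : z ^ 5 = 0 := by
              have := h3; rw [hx] at this; simpa using this
            exact pow_eq_zero_iff (by norm_num) |>.mp this
          exact ⟨hx, hy, hz⟩
        · -- y = 0
          have hx : x = 0 := by
            have := h1; rw [hy] at this
            have : 2 * x = 0 := by linear_combination this
            simpa using this
          have hz : z = 0 := by
            have : z ^ 5 = 0 := by
              have := h3; rw [hx] at this; simpa using this
            exact pow_eq_zero_iff (by norm_num) |>.mp this
          exact ⟨hx, hy, hz⟩
      · -- z = 0
        have hx : x = 0 := by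
          have := h1; rw [hz] at this
          have : 2 * x = 0 := by linear_combination this
          simpa using this
        have hy : y = 0 := by
          have : y ^ 5 = 0 := by
            have := h2; rw [hx] at this; simpa using this
          exact pow_eq_zero_iff (by norm_num) |>.mp this
        exact ⟨hx, hy, hz⟩
    obtain ⟨hx, hy, hz⟩ := hx
    refine ⟨hx, hy, hz, fun hw => hne ?_⟩
    simp [hx, hy, hz, hw]
  · rintro ⟨hx, hy, hz, hw⟩
    refine ⟨?_, ?_, ?_, ?_, ?_⟩ <;> simp [hx, hy, hz, hw]
end

section
/- Let G be the subgroup of (ℂˣ)³ consisting of all triples (α,β,γ) with α² = β⁶ = γ⁶ = αβγ, and let ζ ∈ ℂ be a primitive 6th root of unity. Then G is exactly the subgroup generated by the two elements (−1, 1, −1) and (1, ζ, ζ⁵); moreover G has order 12 and is isomorphic to ℤ/2 × ℤ/6. (This identifies the local quotient model at the singular point of Z in degree 2: the coarse moduli of the chart w ≠ 0 is 𝔸³/⟨(1/2)(1,0,1), (1/6)(0,1,5)⟩.) -/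
section Aux

variable (u : ℂˣ)

private noncomputable def genA : ℂˣ × ℂˣ × ℂˣ := ((-1 : ℂˣ), (1 : ℂˣ), (-1 : ℂˣ))
private noncomputable def genB : ℂˣ × ℂˣ × ℂˣ := ((1 : ℂˣ), u, u ^ 5)

private lemma genA_sq : genA ^ 2 = 1 := by
  unfold genA
  ext <;> simp

private lemma genB_pow_six (hu6 : u ^ 6 = 1) : genB u ^ 6 = 1 := by
  have : (u ^ 5) ^ 6 = 1 := by rw [← pow_mul, mul_comm, pow_mul, hu6, one_pow]
  unfold genB
  ext <;> simp [hu6, this]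

private lemma pow_mod_of (x : ℂˣ × ℂˣ × ℂˣ) {n : ℕ} (hx : x ^ n = 1) (m : ℕ) :
    x ^ (m % n) = x ^ m := by
  conv_rhs => rw [← Nat.div_add_mod m n]
  rw [pow_add, pow_mul, hx, one_pow, one_mul]

/-- The homomorphism from `ZMod 2 × ZMod 6` onto the closure. -/
private noncomputable def hom12 (hu6 : u ^ 6 = 1) :
    Multiplicative (ZMod 2) × Multiplicative (ZMod 6) →* ℂˣ × ℂˣ × ℂˣ where
  toFun p := genA ^ (p.1.toAdd).val * genB u ^ (p.2.toAdd).val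
  map_one' := by simp
  map_mul' p q := by
    simp only [Prod.fst_mul, Prod.snd_mul, toAdd_mul, ZMod.val_add]
    rw [pow_mod_of _ genA_sq, pow_mod_of _ (genB_pow_six u hu6), pow_add, pow_add]
    exact mul_mul_mul_comm _ _ _ _

end Aux

/-- The stabilizer group `G = {(α,β,γ) ∈ (ℂˣ)³ : α² = β⁶ = γ⁶ = αβγ}` is exactly the
subgroup generated by `(−1, 1, −1)` and `(1, ζ, ζ⁵)` (where `ζ` is a primitive 6th root
of unity), has order 12, and is isomorphic to `ℤ/2 × ℤ/6`. -/
theorem degree_two_stabilizer_group (ζ : ℂ) (hζ : IsPrimitiveRoot ζ 6)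
    (u : ℂˣ) (hu : (u : ℂ) = ζ) :
    (∀ g : ℂˣ × ℂˣ × ℂˣ,
        g ∈ Subgroup.closure
            ({((-1 : ℂˣ), (1 : ℂˣ), (-1 : ℂˣ)), ((1 : ℂˣ), u, u ^ 5)} : Set (ℂˣ × ℂˣ × ℂˣ)) ↔
          (g.1 : ℂ) ^ 2 = (g.2.1 : ℂ) ^ 6 ∧ (g.2.1 : ℂ) ^ 6 = (g.2.2 : ℂ) ^ 6 ∧
            (g.2.2 : ℂ) ^ 6 = (g.1 : ℂ) * (g.2.1 : ℂ) * (g.2.2 : ℂ)) ∧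
    Nat.card (Subgroup.closure
        ({((-1 : ℂˣ), (1 : ℂˣ), (-1 : ℂˣ)), ((1 : ℂˣ), u, u ^ 5)} : Set (ℂˣ × ℂˣ × ℂˣ))) = 12 ∧
    Nonempty ((Subgroup.closure
        ({((-1 : ℂˣ), (1 : ℂˣ), (-1 : ℂˣ)), ((1 : ℂˣ), u, u ^ 5)} : Set (ℂˣ × ℂˣ × ℂˣ))) ≃*
      Multiplicative (ZMod 2) × Multiplicative (ZMod 6)) := by
  have hζ6 : ζ ^ 6 = 1 := hζ.pow_eq_one
  have hζ0 : ζ ≠ 0 := hζ.ne_zero (by norm_num)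
  have hu6 : u ^ 6 = 1 := by ext; simp [hu, hζ6]
  have hset : ({((-1 : ℂˣ), (1 : ℂˣ), (-1 : ℂˣ)), ((1 : ℂˣ), u, u ^ 5)} : Set (ℂˣ × ℂˣ × ℂˣ))
      = {genA, genB u} := rfl
  rw [hset]
  have hAmem : genA ∈ Subgroup.closure ({genA, genB u} : Set (ℂˣ × ℂˣ × ℂˣ)) :=
    Subgroup.subset_closure (by simp)
  have hBmem : genB u ∈ Subgroup.closure ({genA, genB u} : Set (ℂˣ × ℂˣ × ℂˣ)) :=
    Subgroup.subset_closure (by simp)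
  -- the defining equations as a subgroup
  let S : Subgroup (ℂˣ × ℂˣ × ℂˣ) :=
  { carrier := {g | (g.1 : ℂ) ^ 2 = (g.2.1 : ℂ) ^ 6 ∧ (g.2.1 : ℂ) ^ 6 = (g.2.2 : ℂ) ^ 6 ∧
      (g.2.2 : ℂ) ^ 6 = (g.1 : ℂ) * (g.2.1 : ℂ) * (g.2.2 : ℂ)}
    one_mem' := by simp
    mul_mem' := by
      rintro g h ⟨h1, h2, h3⟩ ⟨h1', h2', h3'⟩
      simp only [Set.mem_setOf_eq, Prod.fst_mul, Prod.snd_mul, Units.val_mul]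
      refine ⟨?_, ?_, ?_⟩
      · linear_combination ((h.1 : ℂ))^2 * h1 + ((g.2.1 : ℂ))^6 * h1'
      · linear_combination ((h.2.1 : ℂ))^6 * h2 + ((g.2.2 : ℂ))^6 * h2'
      · linear_combination ((h.2.2 : ℂ))^6 * h3 + ((g.1:ℂ) * (g.2.1:ℂ) * (g.2.2:ℂ)) * h3'
    inv_mem' := by
      rintro g ⟨h1, h2, h3⟩
      simp only [Set.mem_setOf_eq, Prod.fst_inv, Prod.snd_inv, Units.val_inv_eq_inv_val]
      have n1 : (g.1 : ℂ) ≠ 0 := Units.ne_zero _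
      have n2 : (g.2.1 : ℂ) ≠ 0 := Units.ne_zero _
      have n3 : (g.2.2 : ℂ) ≠ 0 := Units.ne_zero _
      refine ⟨?_, ?_, ?_⟩
      · field_simp; linear_combination -h1
      · field_simp; linear_combination -h2
      · field_simp
        apply mul_left_cancel₀ n3
        linear_combination -h3 }
  set f := hom12 u hu6 with hfdef
  have hrange : f.range = Subgroup.closure ({genA, genB u} : Set (ℂˣ × ℂˣ × ℂˣ)) := by
    apply le_antisymm
    · rintro w ⟨p, rfl⟩
      exact mul_mem (pow_mem hAmem _) (pow_mem hBmem _)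
    · rw [Subgroup.closure_le]
      rintro w (rfl | rfl)
      · refine ⟨(Multiplicative.ofAdd 1, 1), ?_⟩
        show genA ^ ((Multiplicative.ofAdd (1 : ZMod 2)).toAdd).val *
            genB u ^ ((1 : Multiplicative (ZMod 6)).toAdd).val = genA
        simp [show (1 : ZMod 2).val = 1 from rfl]
      · refine ⟨(1, Multiplicative.ofAdd 1), ?_⟩
        show genA ^ ((1 : Multiplicative (ZMod 2)).toAdd).val *
            genB u ^ ((Multiplicative.ofAdd (1 : ZMod 6)).toAdd).val = genB u
        simp [show (1 : ZMod 6).val = 1 from rfl]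
  have hinj : Function.Injective f := by
    rw [injective_iff_map_eq_one]
    rintro ⟨i, j⟩ hp
    simp only [hfdef, hom12, MonoidHom.coe_mk, OneHom.coe_mk] at hp
    have h2 : u ^ (j.toAdd).val = 1 := by
      simpa [genA, genB, Prod.pow_fst, Prod.pow_snd] using congrArg (fun t => t.2.1) hp
    have hjval : (j.toAdd).val = 0 := by
      have hz1 : ζ ^ (j.toAdd).val = 1 := by
        rw [← hu]
        have h2' := congrArg Units.val h2
        push_cast at h2'
        exact h2'
      have hdvd := (hζ.pow_eq_one_iff_dvd _).mp hz1
      have hlt := (j.toAdd).val_lt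
      omega
    have h1c : (-1 : ℂˣ) ^ (i.toAdd).val = 1 := by
      simpa [genA, genB, Prod.pow_fst, hjval] using congrArg (fun t => t.1) hp
    have hival : (i.toAdd).val = 0 := by
      have hlt := (i.toAdd).val_lt
      interval_cases h : (i.toAdd).val
      · rfl
      · rw [pow_one] at h1c
        have := congrArg Units.val h1c
        norm_num at this
    have hj : j = 1 := toAdd_eq_zero.mp ((ZMod.val_eq_zero _).mp hjval)
    have hi : i = 1 := toAdd_eq_zero.mp ((ZMod.val_eq_zero _).mp hival)
    exact Prod.ext hi hj
  refine ⟨?_, ?_, ?_⟩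
  · -- membership characterization
    intro g
    constructor
    · intro hg
      have hle : Subgroup.closure ({genA, genB u} : Set (ℂˣ × ℂˣ × ℂˣ)) ≤ S := by
        rw [Subgroup.closure_le]
        rintro x (rfl | rfl)
        · exact ⟨by norm_num [genA], by norm_num [genA], by norm_num [genA]⟩
        · have h30 : ζ ^ 30 = 1 := by
            calc ζ ^ 30 = (ζ ^ 6) ^ 5 := by ring
              _ = 1 := by rw [hζ6]; norm_num
          refine ⟨?_, ?_, ?_⟩ <;> simp only [genB] <;> push_cast <;> rw [hu]
          · rw [hζ6]; norm_num
          · rw [← pow_mul]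
            norm_num [hζ6, h30]
          · rw [← pow_mul]
            norm_num [h30]
            rw [← pow_succ']
            exact hζ6.symm
      exact hle hg
    · rintro ⟨h1, h2, h3⟩
      set x := (g.1 : ℂ) with hxdef
      set y := (g.2.1 : ℂ) with hydef
      set z := (g.2.2 : ℂ) with hzdef
      have n1 : x ≠ 0 := Units.ne_zero _
      have n2 : y ≠ 0 := Units.ne_zero _
      have n3 : z ≠ 0 := Units.ne_zero _
      have hxyz : x = y * z := by
        have : x * x = x * (y * z) := by linear_combination h1 + h2 + h3
        exact mul_left_cancel₀ n1 this
      have hz2 : z ^ 2 = y ^ 4 := by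
        have : y ^ 2 * z ^ 2 = y ^ 2 * y ^ 4 := by
          rw [hxyz] at h1; linear_combination h1
        exact mul_left_cancel₀ (pow_ne_zero 2 n2) this
      have hy6 : y ^ 6 = 1 := by
        have : y ^ 6 * y ^ 6 = y ^ 6 * 1 := by
          rw [mul_one]
          calc y ^ 6 * y ^ 6 = (y ^ 4) ^ 3 := by ring
            _ = (z ^ 2) ^ 3 := by rw [hz2]
            _ = z ^ 6 := by ring
            _ = y ^ 6 := h2.symm
        exact mul_left_cancel₀ (pow_ne_zero 6 n2) this
      obtain ⟨j, hj6, hjy⟩ := hζ.eq_pow_of_pow_eq_one hy6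
      have hx2 : x ^ 2 = 1 := by rw [h1, hy6]
      have hzj : ∀ w : ℂ, x = w → z = w * ζ ^ (5 * j) := by
        intro w hw
        have h6j : ζ ^ (6 * j) = 1 := by
          rw [pow_mul, hζ6, one_pow]
        apply mul_right_cancel₀ (pow_ne_zero j hζ0)
        calc z * ζ ^ j = z * y := by rw [hjy]
          _ = x := by rw [hxyz]; ring
          _ = w * ζ ^ (6 * j) := by rw [hw, h6j, mul_one]
          _ = w * ζ ^ (5 * j) * ζ ^ j := by
              rw [mul_assoc, ← pow_add, show 5*j+j = 6*j from by ring]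
      have hcase : (x - 1) * (x + 1) = 0 := by linear_combination hx2
      rcases mul_eq_zero.mp hcase with hc | hc
      · -- x = 1 : g = genB u ^ j
        have hx1 : x = 1 := sub_eq_zero.mp hc
        have hg : g = genB u ^ j := by
          ext
          · show x = ((genB u ^ j).1 : ℂ)
            simp [genB, hx1]
          · show y = ((genB u ^ j).2.1 : ℂ)
            simp [genB, hu, ← hjy]
          · show z = ((genB u ^ j).2.2 : ℂ)
            have := hzj 1 hx1
            simp [genB, hu, ← pow_mul]
            rw [this]; ring_nf
        rw [hg]
        exact pow_mem hBmem j
      · have hx1 : x = -1 := eq_neg_of_add_eq_zero_left hc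
        have hg : g = genA * genB u ^ j := by
          ext
          · show x = (((genA * genB u ^ j)).1 : ℂ)
            simp [genA, genB, hx1]
          · show y = (((genA * genB u ^ j)).2.1 : ℂ)
            simp [genA, genB, hu, ← hjy]
          · show z = (((genA * genB u ^ j)).2.2 : ℂ)
            have := hzj (-1) hx1
            simp [genA, genB, hu, ← pow_mul]
            rw [this]; ring_nf
        rw [hg]
        exact mul_mem hAmem (pow_mem hBmem j)
  · -- cardinality
    rw [← hrange]
    rw [Nat.card_congr (MonoidHom.ofInjective hinj).toEquiv.symm]
    simp [Nat.card_eq_fintype_card]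
  · -- isomorphism
    exact ⟨(MulEquiv.subgroupCongr hrange).symm.trans (MonoidHom.ofInjective hinj).symm⟩
end

section
/- Let G be the subgroup of (ℂˣ)³ consisting of all triples (α,β,γ) with α⁴ = β⁴ = γ⁴ = αβγ, and let i ∈ ℂ be a primitive 4th root of unity. Then G is exactly the subgroup generated by the two elements (i, i³, 1) and (1, i, i³); moreover G has order 16 and is isomorphic to ℤ/4 × ℤ/4. (This identifies the local quotient model at the singular point of Z in degree 4: the coarse moduli of the chart w ≠ 0 is 𝔸³/⟨(1/4)(1,3,0), (1/4)(0,1,3)⟩.) -/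
private lemma pow_mod4 (u : ℂˣ) (h : u ^ 4 = 1) (m : ℕ) : u ^ (m % 4) = u ^ m := by
  conv_rhs => rw [← Nat.div_add_mod m 4]
  rw [pow_add, pow_mul, h, one_pow, one_mul]

/-- auxiliary hom `Multiplicative (ZMod 4) →* ℂˣ`, `a ↦ u ^ a.val`. -/
private def psiAux (u : ℂˣ) (h : u ^ 4 = 1) : Multiplicative (ZMod 4) →* ℂˣ where
  toFun a := u ^ (Multiplicative.toAdd a).val
  map_one' := by simp
  map_mul' a b := by
    show u ^ (ZMod.val (Multiplicative.toAdd a + Multiplicative.toAdd b)) = _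
    rw [ZMod.val_add, pow_mod4 u h, pow_add]

/-- the stabilizer condition as a subgroup. -/
private def condSubgroup : Subgroup (ℂˣ × ℂˣ × ℂˣ) where
  carrier := {g | (g.1 : ℂ) ^ 4 = (g.2.1 : ℂ) ^ 4 ∧ (g.2.1 : ℂ) ^ 4 = (g.2.2 : ℂ) ^ 4 ∧
      (g.2.2 : ℂ) ^ 4 = (g.1 : ℂ) * (g.2.1 : ℂ) * (g.2.2 : ℂ)}
  one_mem' := by simp
  mul_mem' := by
    rintro a b ⟨h1, h2, h3⟩ ⟨k1, k2, k3⟩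
    refine ⟨?_, ?_, ?_⟩ <;> simp only [Prod.fst_mul, Prod.snd_mul, Units.val_mul, mul_pow]
    · rw [h1, k1]
    · rw [h2, k2]
    · rw [h3, k3]; ring
  inv_mem' := by
    rintro a ⟨h1, h2, h3⟩
    refine ⟨?_, ?_, ?_⟩ <;>
      simp only [Prod.fst_inv, Prod.snd_inv, Units.val_inv_eq_inv_val, inv_pow]
    · rw [h1]
    · rw [h2]
    · rw [h3, mul_inv, mul_inv]

/-- The stabilizer group `G = {(α,β,γ) ∈ (ℂˣ)³ : α⁴ = β⁴ = γ⁴ = αβγ}` is exactly the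
subgroup generated by `(i, i³, 1)` and `(1, i, i³)` (where `i` is a primitive 4th root
of unity), has order 16, and is isomorphic to `ℤ/4 × ℤ/4`. -/
theorem degree_four_stabilizer_group (i : ℂ) (hi : IsPrimitiveRoot i 4)
    (u : ℂˣ) (hu : (u : ℂ) = i) :
    (∀ g : ℂˣ × ℂˣ × ℂˣ,
        g ∈ Subgroup.closure
            ({(u, u ^ 3, (1 : ℂˣ)), ((1 : ℂˣ), u, u ^ 3)} : Set (ℂˣ × ℂˣ × ℂˣ)) ↔
          (g.1 : ℂ) ^ 4 = (g.2.1 : ℂ) ^ 4 ∧ (g.2.1 : ℂ) ^ 4 = (g.2.2 : ℂ) ^ 4 ∧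
            (g.2.2 : ℂ) ^ 4 = (g.1 : ℂ) * (g.2.1 : ℂ) * (g.2.2 : ℂ)) ∧
    Nat.card (Subgroup.closure
        ({(u, u ^ 3, (1 : ℂˣ)), ((1 : ℂˣ), u, u ^ 3)} : Set (ℂˣ × ℂˣ × ℂˣ))) = 16 ∧
    Nonempty ((Subgroup.closure
        ({(u, u ^ 3, (1 : ℂˣ)), ((1 : ℂˣ), u, u ^ 3)} : Set (ℂˣ × ℂˣ × ℂˣ))) ≃*
      Multiplicative (ZMod 4) × Multiplicative (ZMod 4)) := by
  have hpu : IsPrimitiveRoot u 4 := IsPrimitiveRoot.coe_units_iff.mp (hu ▸ hi)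
  have hu4 : u ^ 4 = 1 := hpu.pow_eq_one
  have hou : orderOf u = 4 := hpu.eq_orderOf.symm
  have hi4 : i ^ 4 = 1 := hi.pow_eq_one
  set S : Set (ℂˣ × ℂˣ × ℂˣ) := {(u, u ^ 3, (1 : ℂˣ)), ((1 : ℂˣ), u, u ^ 3)} with hS
  -- the combined hom
  set ψ := psiAux u hu4 with hψ
  set F : Multiplicative (ZMod 4) × Multiplicative (ZMod 4) →* ℂˣ × ℂˣ × ℂˣ :=
    (ψ.comp (MonoidHom.fst _ _)).prod
      (((ψ.comp (MonoidHom.fst _ _)) ^ 3 * ψ.comp (MonoidHom.snd _ _)).prod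
        ((ψ.comp (MonoidHom.snd _ _)) ^ 3)) with hF
  have hFapp : ∀ a b : ZMod 4, F (Multiplicative.ofAdd a, Multiplicative.ofAdd b) =
      (u ^ a.val, u ^ (3 * a.val) * u ^ b.val, u ^ (3 * b.val)) := by
    intro a b
    simp only [hF, hψ, MonoidHom.prod_apply, MonoidHom.mul_apply, MonoidHom.pow_apply,
      MonoidHom.comp_apply, MonoidHom.coe_fst, MonoidHom.coe_snd, psiAux, MonoidHom.coe_mk,
      OneHom.coe_mk, toAdd_ofAdd, Prod.mk.injEq]
    refine ⟨trivial, ?_, ?_⟩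
    · rw [← pow_mul, mul_comm a.val 3]
    · rw [← pow_mul, mul_comm b.val 3]
  have hval1 : ((1 : ZMod 4)).val = 1 := rfl
  have hF1 : F (Multiplicative.ofAdd 1, 1) = (u, u ^ 3, (1 : ℂˣ)) := by
    have := hFapp 1 0
    simpa [hval1] using this
  have hF2 : F (1, Multiplicative.ofAdd 1) = ((1 : ℂˣ), u, u ^ 3) := by
    have := hFapp 0 1
    simpa [hval1] using this
  -- injectivity
  have hinj : Function.Injective F := by
    rw [injective_iff_map_eq_one]
    rintro ⟨a, b⟩ hab
    have := hFapp (Multiplicative.toAdd a) (Multiplicative.toAdd b)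
    simp only [ofAdd_toAdd] at this
    rw [this] at hab
    rw [Prod.mk_eq_one, Prod.mk_eq_one] at hab
    obtain ⟨hav, e2', e3'⟩ := hab
    have h4a : (4 : ℕ) ∣ (Multiplicative.toAdd a).val := by
      have := orderOf_dvd_of_pow_eq_one hav; rwa [hou] at this
    have hbv : u ^ (Multiplicative.toAdd b).val = 1 := by
      have : u ^ (3 * (Multiplicative.toAdd a).val) = 1 := by
        rw [mul_comm, pow_mul, hav, one_pow]
      rw [this, one_mul] at e2'
      exact e2'
    have h4b : (4 : ℕ) ∣ (Multiplicative.toAdd b).val := by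
      have := orderOf_dvd_of_pow_eq_one hbv; rwa [hou] at this
    have ha0 : (Multiplicative.toAdd a).val = 0 :=
      Nat.eq_zero_of_dvd_of_lt h4a (ZMod.val_lt _)
    have hb0 : (Multiplicative.toAdd b).val = 0 :=
      Nat.eq_zero_of_dvd_of_lt h4b (ZMod.val_lt _)
    have : Multiplicative.toAdd a = 0 := (ZMod.val_eq_zero _).mp ha0
    have hb : Multiplicative.toAdd b = 0 := (ZMod.val_eq_zero _).mp hb0
    ext
    · exact this
    · exact hb
  -- range = closure
  have hr1 : Subgroup.closure S ≤ F.range := by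
    rw [Subgroup.closure_le]
    rintro g (rfl | rfl)
    · exact ⟨(Multiplicative.ofAdd 1, 1), hF1⟩
    · exact ⟨(1, Multiplicative.ofAdd 1), hF2⟩
  have hr2 : F.range ≤ Subgroup.closure S := by
    rintro g ⟨⟨a, b⟩, rfl⟩
    have hab : (a, b) = (Multiplicative.ofAdd 1, (1 : Multiplicative (ZMod 4))) ^
          (Multiplicative.toAdd a).val *
        ((1 : Multiplicative (ZMod 4)), Multiplicative.ofAdd 1) ^ (Multiplicative.toAdd b).val := by
      have key : ∀ c : Multiplicative (ZMod 4),
          (Multiplicative.ofAdd (1 : ZMod 4)) ^ (Multiplicative.toAdd c).val = c := by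
        intro c
        rw [← ofAdd_nsmul, nsmul_eq_mul, mul_one,
          ZMod.natCast_rightInverse (Multiplicative.toAdd c)]
        exact ofAdd_toAdd c
      ext
      · simp [key a]
      · simp [key b]
    rw [hab, map_mul, map_pow, map_pow, hF1, hF2]
    exact mul_mem (pow_mem (Subgroup.subset_closure (by simp [hS])) _)
      (pow_mem (Subgroup.subset_closure (by simp [hS])) _)
  have hrange : F.range = Subgroup.closure S := le_antisymm hr2 hr1
  -- build the equiv
  have e : Multiplicative (ZMod 4) × Multiplicative (ZMod 4) ≃* Subgroup.closure S :=
    (MonoidHom.ofInjective hinj).trans (MulEquiv.subgroupCongr hrange)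
  refine ⟨?_, ?_, ⟨e.symm⟩⟩
  · intro g
    constructor
    · intro hg
      have hu12 : u ^ (12 : ℕ) = 1 := by
        rw [show (12 : ℕ) = 4 * 3 by norm_num, pow_mul, hu4, one_pow]
      have hmulu : u * u ^ 3 = 1 := (pow_succ' u 3).symm.trans hu4
      have hsub : Subgroup.closure S ≤ condSubgroup := by
        rw [Subgroup.closure_le]
        rintro x (rfl | rfl)
        · refine ⟨?_, ?_, ?_⟩
          · rw [← Units.val_pow_eq_pow_val, ← Units.val_pow_eq_pow_val, ← pow_mul, hu4,
              show (3 * 4 : ℕ) = 12 by norm_num, hu12]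
          · rw [← Units.val_pow_eq_pow_val, ← pow_mul, show (3 * 4 : ℕ) = 12 by norm_num, hu12,
              Units.val_one, one_pow]
          · rw [Units.val_one, one_pow, mul_one, ← Units.val_mul, hmulu, Units.val_one]
        · refine ⟨?_, ?_, ?_⟩
          · rw [Units.val_one, one_pow, ← Units.val_pow_eq_pow_val, hu4, Units.val_one]
          · rw [← Units.val_pow_eq_pow_val, ← Units.val_pow_eq_pow_val, ← pow_mul, hu4,
              show (3 * 4 : ℕ) = 12 by norm_num, hu12]
          · rw [← Units.val_pow_eq_pow_val, ← pow_mul, show (3 * 4 : ℕ) = 12 by norm_num, hu12,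
              Units.val_one, one_mul, ← Units.val_mul, hmulu, Units.val_one]
      exact hsub hg
    · rintro ⟨h1, h2, h3⟩
      -- first show all fourth powers are 1
      have hane : (g.1 : ℂ) ≠ 0 := Units.ne_zero _
      have hbne : (g.2.1 : ℂ) ≠ 0 := Units.ne_zero _
      have hcne : (g.2.2 : ℂ) ≠ 0 := Units.ne_zero _
      set t : ℂ := (g.1 : ℂ) * (g.2.1 : ℂ) * (g.2.2 : ℂ) with ht
      have ha4 : (g.1 : ℂ) ^ 4 = t := by rw [h1, h2, h3]
      have hb4 : (g.2.1 : ℂ) ^ 4 = t := by rw [h2, h3]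
      have hc4 : (g.2.2 : ℂ) ^ 4 = t := h3
      have htne : t ≠ 0 := by
        simp only [ht]; exact mul_ne_zero (mul_ne_zero hane hbne) hcne
      have ht1 : t = 1 := by
        have h4 : t ^ 4 = t ^ 3 := by
          calc t ^ 4 = (g.1 : ℂ) ^ 4 * (g.2.1 : ℂ) ^ 4 * (g.2.2 : ℂ) ^ 4 := by rw [ht]; ring
          _ = t ^ 3 := by rw [ha4, hb4, hc4]; ring
        have : t ^ 3 * t = t ^ 3 * 1 := by rw [mul_one, ← pow_succ]; exact h4
        exact mul_left_cancel₀ (pow_ne_zero 3 htne) this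
      rw [ht1] at ha4 hb4 hc4
      obtain ⟨k, hk4, hk⟩ := hi.eq_pow_of_pow_eq_one ha4
      obtain ⟨m, hm4, hm⟩ := hi.eq_pow_of_pow_eq_one hb4
      obtain ⟨c, hc4', hc⟩ := hi.eq_pow_of_pow_eq_one hc4
      have ek : g.1 = u ^ k := Units.ext (by rw [Units.val_pow_eq_pow_val, hu, hk])
      have em : g.2.1 = u ^ m := Units.ext (by rw [Units.val_pow_eq_pow_val, hu, hm])
      have ec : g.2.2 = u ^ c := Units.ext (by rw [Units.val_pow_eq_pow_val, hu, hc])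
      have hsum : u ^ (k + m + c) = 1 := by
        apply Units.ext
        rw [Units.val_pow_eq_pow_val, Units.val_one, hu, pow_add, pow_add, hk, hm, hc, ← ht, ht1]
      have hdvd : (4 : ℕ) ∣ k + m + c := by
        have := orderOf_dvd_of_pow_eq_one hsum; rwa [hou] at this
      have hgeq : g = (u, u ^ 3, (1 : ℂˣ)) ^ k * ((1 : ℂˣ), u, u ^ 3) ^ (3 * c) := by
        have hmod : ∀ p q : ℕ, p % 4 = q % 4 → u ^ p = u ^ q := fun p q h =>
          pow_eq_pow_iff_modEq.mpr (by rwa [hou])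
        refine Prod.ext ?_ (Prod.ext ?_ ?_)
        · simp only [Prod.fst_mul, Prod.pow_fst, one_pow, mul_one]; exact ek
        · simp only [Prod.snd_mul, Prod.fst_mul, Prod.pow_snd, Prod.pow_fst, ← pow_mul,
            ← pow_add]
          rw [em]
          exact hmod m (3 * k + 3 * c) (by omega)
        · simp only [Prod.snd_mul, Prod.pow_snd, one_pow, one_mul, ← pow_mul]
          rw [ec]
          exact hmod c (3 * (3 * c)) (by omega)
      rw [hgeq]
      exact mul_mem (pow_mem (Subgroup.subset_closure (by simp [hS])) _)
        (pow_mem (Subgroup.subset_closure (by simp [hS])) _)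
  · rw [Nat.card_congr e.symm.toEquiv]
    simp [Nat.card_eq_fintype_card]
end

section
/- Let f = x⁵ + y⁵ + z⁵ + xyz ∈ ℂ[x,y,z]. The only point (x,y,z) ∈ ℂ³ at which f and all three of its partial derivatives ∂f/∂x = 5x⁴ + yz, ∂f/∂y = 5y⁴ + xz, ∂f/∂z = 5z⁴ + xy vanish simultaneously is the origin (0,0,0). (Hence the hypersurface S = {f = 0} is smooth away from the origin; note that the three partial derivatives alone do admit common zeros away from the origin, so the hypothesis f = 0 is essential.) -/
/-- The only common zero of `f = x⁵ + y⁵ + z⁵ + xyz` and its three partial derivatives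
is the origin; moreover the three partial derivatives alone do admit a common zero away
from the origin, so the hypothesis `f = 0` is essential. -/
theorem genus_two_mirror_singular_locus :
    (∀ x y z : ℂ,
        (x ^ 5 + y ^ 5 + z ^ 5 + x * y * z = 0 ∧
          5 * x ^ 4 + y * z = 0 ∧ 5 * y ^ 4 + x * z = 0 ∧ 5 * z ^ 4 + x * y = 0) ↔
        (x = 0 ∧ y = 0 ∧ z = 0)) ∧
    (∃ x y z : ℂ, (x, y, z) ≠ (0, 0, 0) ∧
        5 * x ^ 4 + y * z = 0 ∧ 5 * y ^ 4 + x * z = 0 ∧ 5 * z ^ 4 + x * y = 0) := by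
  constructor
  · intro x y z
    constructor
    · rintro ⟨h0, h1, h2, h3⟩
      have hxyz : x * y * z = 0 := by
        linear_combination (-(1:ℂ)/2) * (x * h1 + y * h2 + z * h3) + (5/2 : ℂ) * h0
      have hpow : ∀ w : ℂ, 5 * w ^ 4 = 0 → w = 0 := by
        intro w hw
        have : w ^ 4 = 0 := by linear_combination (1/5 : ℂ) * hw
        exact pow_eq_zero_iff (by norm_num) |>.mp this
      rcases mul_eq_zero.mp hxyz with hxy | hz
      · rcases mul_eq_zero.mp hxy with hx | hy
        · subst hx
          have hyz : y * z = 0 := by linear_combination h1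
          rcases mul_eq_zero.mp hyz with hy | hz
          · subst hy
            exact ⟨rfl, rfl, hpow z (by linear_combination h3)⟩
          · subst hz
            exact ⟨rfl, hpow y (by linear_combination h2), rfl⟩
        · subst hy
          have hxz : x * z = 0 := by linear_combination h2
          rcases mul_eq_zero.mp hxz with hx | hz
          · subst hx
            exact ⟨rfl, rfl, hpow z (by linear_combination h3)⟩
          · subst hz
            exact ⟨hpow x (by linear_combination h1), rfl, rfl⟩
      · subst hz
        have hxy : x * y = 0 := by linear_combination h3
        rcases mul_eq_zero.mp hxy with hx | hy
        · subst hx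
          exact ⟨rfl, hpow y (by linear_combination h2), rfl⟩
        · subst hy
          exact ⟨hpow x (by linear_combination h1), rfl, rfl⟩
    · rintro ⟨rfl, rfl, rfl⟩
      norm_num
  · refine ⟨Complex.I * (Real.sqrt 5)⁻¹, Complex.I * (Real.sqrt 5)⁻¹,
      Complex.I * (Real.sqrt 5)⁻¹, ?_, ?_, ?_, ?_⟩
    · have h5 : (Real.sqrt 5 : ℂ) ≠ 0 := by
        norm_cast
        positivity
      simp [Prod.ext_iff, Complex.I_ne_zero, h5]
    all_goals
    · have hsq : ((Real.sqrt 5 : ℝ) : ℂ) ^ 2 = 5 := by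
        norm_cast
        rw [sq]
        exact Real.mul_self_sqrt (by norm_num)
      have h5 : (Real.sqrt 5 : ℂ) ≠ 0 := by
        norm_cast
        positivity
      push_cast
      field_simp
      ring_nf
      linear_combination ((Real.sqrt 5 : ℂ) ^ 2 + 5 * Complex.I ^ 2 - 5) * Complex.I_sq - hsq
end
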